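/- arXiv:1704.08546 — 4 statements merged into one kernel-verified Lean document; each statement's English description precedes it below -/
import Mathlib

section
/- Let T be a compact operator on a separable Hilbert space H and let (e_j)_{j∈J} be a Hilbert (orthonormal) basis of H indexed by a countable set J. For any finite subset I ⊂ J with |I| = n, the (n+1)-st singular value of T satisfies μ_{n+1}(T) ≤ Σ_{j ∈ J \ I} ‖T e_j‖. -/
open scoped ENNReal InnerProductSpace

variable {H : Type*} [NormedAddCommGroup H] [InnerProductSpace ℂ H] [CompleteSpace H]

/-- The `(n+1)`-st singular value (approximation number) of an operator `T`, given by the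
min-max principle: `μ_{n+1}(T) = inf_{dim F = n} sup_{w ∈ F^⊥, ‖w‖ = 1} ‖T w‖`. -/
noncomputable def singularValue (T : H →L[ℂ] H) (n : ℕ) : ℝ :=
  ⨅ F : {F : Submodule ℂ H // Module.finrank ℂ F = n},
    ⨆ w : {w : H // w ∈ (F : Submodule ℂ H)ᗮ ∧ ‖w‖ = 1}, ‖T (w : H)‖

set_option maxHeartbeats 1000000 in
/-- For a compact operator `T` on a separable Hilbert space with orthonormal basis
`(e_j)_{j ∈ J}`, `J` countable, and any finite `I ⊆ J` with `|I| = n`, the `(n+1)`-st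
singular value satisfies `μ_{n+1}(T) ≤ Σ_{j ∈ J \ I} ‖T e_j‖`. -/
theorem singularValue_le_tsum_norm (J : Type*) [Countable J]
    (e : HilbertBasis J ℂ H) (T : H →L[ℂ] H)
    (hT : IsCompactOperator T) (I : Finset J) :
    ENNReal.ofReal (singularValue T I.card) ≤
      ∑' j : {j : J // j ∉ I}, (‖T (e (j : J))‖₊ : ℝ≥0∞) := by
  set S := ∑' j : {j : J // j ∉ I}, (‖T (e (j : J))‖₊ : ℝ≥0∞) with hSdef
  by_cases hS : S = ⊤
  · rw [hS]; exact le_top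
  have hsum : Summable (fun j : {j : J // j ∉ I} => ‖T (e (j : J))‖) := by
    have h := ENNReal.tsum_coe_ne_top_iff_summable.mp hS
    exact NNReal.summable_coe.mpr h
  have hStoReal : S.toReal = ∑' j : {j : J // j ∉ I}, ‖T (e (j : J))‖ := by
    rw [hSdef, ENNReal.tsum_toReal_eq (fun _ => ENNReal.coe_ne_top)]
    simp
  have key : singularValue T I.card ≤ S.toReal := by
    set F : Submodule ℂ H := Submodule.span ℂ (Set.range ((⇑e) ∘ (Subtype.val : I → J))) with hFdef
    have hF : Module.finrank ℂ F = I.card := by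
      rw [hFdef, finrank_span_eq_card (e.orthonormal.linearIndependent.comp
        (Subtype.val : I → J) Subtype.val_injective)]
      simp
    have h1 : singularValue T I.card ≤
        ⨆ w : {w : H // w ∈ Fᗮ ∧ ‖w‖ = 1}, ‖T (w : H)‖ := by
      refine ciInf_le_of_le ?_ ⟨F, hF⟩ le_rfl
      refine ⟨0, ?_⟩
      rintro x ⟨G, rfl⟩
      exact Real.iSup_nonneg fun w => norm_nonneg _
    refine h1.trans (Real.iSup_le ?_ (hStoReal ▸ tsum_nonneg fun _ => norm_nonneg _))
    rintro ⟨w, hw, hw1⟩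
    have hmem : ∀ j ∈ I, (⟪e j, w⟫_ℂ) = 0 := fun j hj =>
      (Submodule.mem_orthogonal _ _).mp hw (e j) (Submodule.subset_span ⟨⟨j, hj⟩, rfl⟩)
    have hrepr : HasSum (fun j : J => (⟪e j, w⟫_ℂ) • e j) w := by
      simpa [e.repr_apply_apply] using e.hasSum_repr w
    have hTsum : HasSum (fun j : J => (⟪e j, w⟫_ℂ) • T (e j)) (T w) := by
      simpa using T.hasSum hrepr
    have hTsum' : HasSum (fun j : {j : J // j ∉ I} => (⟪e (j : J), w⟫_ℂ) • T (e (j : J)))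
        (T w) := by
      refine (hasSum_subtype_iff_of_support_subset ?_).mpr hTsum
      intro j hj
      simp only [Function.mem_support] at hj
      intro hjI
      exact hj (by rw [hmem j hjI, zero_smul])
    have hbound : ∀ j : {j : J // j ∉ I},
        ‖(⟪e (j : J), w⟫_ℂ) • T (e (j : J))‖ ≤ ‖T (e (j : J))‖ := by
      intro j
      rw [norm_smul]
      have h2 : ‖(⟪e (j : J), w⟫_ℂ)‖ ≤ 1 := by
        calc ‖(⟪e (j : J), w⟫_ℂ)‖ ≤ ‖e (j : J)‖ * ‖w‖ := norm_inner_le_norm _ _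
          _ = 1 := by rw [e.orthonormal.1 (j : J), hw1, one_mul]
      calc ‖(⟪e (j : J), w⟫_ℂ)‖ * ‖T (e (j : J))‖ ≤ 1 * ‖T (e (j : J))‖ :=
            mul_le_mul_of_nonneg_right h2 (norm_nonneg _)
        _ = ‖T (e (j : J))‖ := one_mul _
    have hsum2 : Summable (fun j : {j : J // j ∉ I} =>
        ‖(⟪e (j : J), w⟫_ℂ) • T (e (j : J))‖) :=
      Summable.of_nonneg_of_le (fun _ => norm_nonneg _) hbound hsum
    calc ‖T w‖ ≤ ∑' j : {j : J // j ∉ I}, ‖(⟪e (j : J), w⟫_ℂ) • T (e (j : J))‖ := by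
          rw [← hTsum'.tsum_eq]; exact norm_tsum_le_tsum_norm hsum2
      _ ≤ ∑' j : {j : J // j ∉ I}, ‖T (e (j : J))‖ := Summable.tsum_le_tsum hbound hsum2 hsum
      _ = S.toReal := hStoReal.symm
  calc ENNReal.ofReal (singularValue T I.card) ≤ ENNReal.ofReal S.toReal :=
        ENNReal.ofReal_le_ofReal key
    _ = S := ENNReal.ofReal_toReal hS
end

section
/- Let φ: [M₀, ∞) → ℝ⁺ be a C² function with φ'(x) > 0 on [M₀, ∞), and suppose sup_{x ≥ M₀} |φ''(x)/(φ'(x))³| ≤ C. Then for all M ≥ M₀, ∫_M^∞ e^{-φ(t)} dt ≤ e^{-φ(M)}/φ'(M) + C·e^{-φ(M)}. -/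
open Set MeasureTheory

/-- Integration-by-parts bound: if `φ` is `C²` on `[M₀, ∞)`, positive with `φ' > 0` there,
and `|φ''/(φ')³| ≤ C` on `[M₀, ∞)`, then for all `M ≥ M₀`,
`∫_M^∞ e^{-φ(t)} dt ≤ e^{-φ(M)}/φ'(M) + C·e^{-φ(M)}`. -/
theorem integral_exp_neg_le (φ : ℝ → ℝ) (M₀ C : ℝ)
    (hC2 : ContDiffOn ℝ 2 φ (Ici M₀))
    (hpos : ∀ x ∈ Ici M₀, 0 < φ x)
    (hder : ∀ x ∈ Ici M₀, 0 < deriv φ x)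
    (hratio : ∀ x ∈ Ici M₀, |deriv (deriv φ) x / (deriv φ x) ^ 3| ≤ C) :
    ∀ M, M₀ ≤ M →
      ∫ t in Ioi M, Real.exp (-φ t) ≤
        Real.exp (-φ M) / deriv φ M + C * Real.exp (-φ M) := by
  intro M hM
  set S : Set ℝ := Ici M₀ with hS
  set ψ : ℝ → ℝ := deriv φ with hψ
  set ψ₂ : ℝ → ℝ := derivWithin (derivWithin φ S) S with hψ₂
  have hud : UniqueDiffOn ℝ S := uniqueDiffOn_Ici M₀
  have hCnn : 0 ≤ C := le_trans (abs_nonneg _) (hratio M₀ Set.self_mem_Ici)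
  -- φ is (two-sidedly) differentiable on S with derivative ψ
  have hdiff : ∀ x ∈ S, HasDerivAt φ (ψ x) x := fun x hx =>
    (differentiableAt_of_deriv_ne_zero (ne_of_gt (hder x hx))).hasDerivAt
  have heq : ∀ x ∈ S, derivWithin φ S x = ψ x := fun x hx =>
    (differentiableAt_of_deriv_ne_zero (ne_of_gt (hder x hx))).derivWithin (hud x hx)
  have hψcont : ContinuousOn ψ S :=
    (hC2.continuousOn_derivWithin hud one_le_two).congr fun x hx => (heq x hx).symm
  have hψ₂cont : ContinuousOn ψ₂ S :=
    (hC2.derivWithin hud le_rfl).continuousOn_derivWithin hud le_rfl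
  -- derivative of ψ at interior points
  have hψder : ∀ x ∈ Ioi M₀, HasDerivAt ψ (ψ₂ x) x := by
    intro x hx
    have hmem : S ∈ nhds x := Ici_mem_nhds hx
    have h1 : DifferentiableWithinAt ℝ (derivWithin φ S) S x :=
      ((hC2.derivWithin (m := 1) hud le_rfl).differentiableOn one_ne_zero) x (le_of_lt (show M₀ < x from hx))
    have h2 : HasDerivAt (derivWithin φ S) (ψ₂ x) x := by
      have h2' := (h1.differentiableAt hmem).hasDerivAt
      rw [(derivWithin_of_mem_nhds hmem).symm] at h2'
      exact h2'
    refine h2.congr_of_eventuallyEq ?_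
    filter_upwards [hmem] with y hy using (heq y hy).symm
  have hψ₂eq : ∀ x ∈ Ioi M₀, deriv ψ x = ψ₂ x := fun x hx => (hψder x hx).deriv
  -- the ratio bound in terms of ψ₂
  have hrat : ∀ x ∈ Ioi M₀, |ψ₂ x / ψ x ^ 2| ≤ C * ψ x := by
    intro x hx
    have hxS : x ∈ S := le_of_lt (show M₀ < x from hx)
    have hψx : 0 < ψ x := hder x hxS
    have h := hratio x hxS
    rw [hψ₂eq x hx] at h
    rw [abs_div, abs_of_pos (pow_pos hψx 3)] at h
    rw [abs_div, abs_of_pos (pow_pos hψx 2), div_le_iff₀ (pow_pos hψx 2)]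
    have := (div_le_iff₀ (pow_pos hψx 3)).mp h
    calc |ψ₂ x| ≤ C * ψ x ^ 3 := this
      _ = C * ψ x * ψ x ^ 2 := by ring
  -- the functions
  set g : ℝ → ℝ := fun t => Real.exp (-φ t) / ψ t with hg
  set h : ℝ → ℝ := fun t => ψ₂ t / ψ t ^ 2 with hh
  have hgcont : ContinuousOn g S := by
    refine ContinuousOn.div ?_ hψcont fun x hx => ne_of_gt (hder x hx)
    exact (hC2.continuousOn.neg).rexp
  have hhcont : ContinuousOn h S := by
    refine hψ₂cont.div (hψcont.pow 2) fun x hx => ?_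
    exact ne_of_gt (pow_pos (hder x hx) 2)
  -- derivative of -g at interior points
  have hgder : ∀ t ∈ Ioi M₀, HasDerivAt (fun t => -g t)
      (Real.exp (-φ t) + Real.exp (-φ t) * h t) t := by
    intro t ht
    have htS : t ∈ S := le_of_lt (show M₀ < t from ht)
    have hψt : ψ t ≠ 0 := ne_of_gt (hder t htS)
    have h1 : HasDerivAt (fun t => Real.exp (-φ t)) (Real.exp (-φ t) * (-ψ t)) t :=
      ((hdiff t htS).neg).exp
    have h2 : HasDerivAt g ((Real.exp (-φ t) * (-ψ t) * ψ t - Real.exp (-φ t) * ψ₂ t) / ψ t ^ 2) t :=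
      h1.div (hψder t ht) hψt
    have h3 := h2.neg
    refine h3.congr_deriv ?_
    simp only [hh]
    field_simp
    ring
  -- key interval bound
  have key : ∀ N, M ≤ N → ∫ t in M..N, Real.exp (-φ t) ≤
      Real.exp (-φ M) / ψ M + C * Real.exp (-φ M) := by
    intro N hN
    have hIccS : Icc M N ⊆ S := fun x hx => le_trans hM hx.1
    have hIooS : Ioo M N ⊆ Ioi M₀ := fun x hx => lt_of_le_of_lt hM hx.1
    have hIocS : Ioc M N ⊆ Ioi M₀ := fun x hx => lt_of_le_of_lt hM hx.1
    have huIcc : uIcc M N = Icc M N := uIcc_of_le hN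
    have hMS : M ∈ S := hM
    have hψM : 0 < ψ M := hder M hMS
    -- continuity on Icc of the pieces
    have cexp : ContinuousOn (fun t => Real.exp (-φ t)) (Icc M N) :=
      ((hC2.continuousOn.neg).rexp).mono hIccS
    have ch : ContinuousOn h (Icc M N) := hhcont.mono hIccS
    have cψ : ContinuousOn ψ (Icc M N) := hψcont.mono hIccS
    have iexp : IntervalIntegrable (fun t => Real.exp (-φ t)) volume M N := by
      rw [intervalIntegrable_iff_integrableOn_Icc_of_le hN]
      exact cexp.integrableOn_compact isCompact_Icc
    have ihe : IntervalIntegrable (fun t => Real.exp (-φ t) * h t) volume M N := by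
      rw [intervalIntegrable_iff_integrableOn_Icc_of_le hN]
      exact (cexp.mul ch).integrableOn_compact isCompact_Icc
    have iψe : IntervalIntegrable (fun t => ψ t * Real.exp (-φ t)) volume M N := by
      rw [intervalIntegrable_iff_integrableOn_Icc_of_le hN]
      exact (cψ.mul cexp).integrableOn_compact isCompact_Icc
    -- FTC 1: the main identity
    have ftc1 : ∫ t in M..N, (Real.exp (-φ t) + Real.exp (-φ t) * h t) = g M - g N := by
      have := intervalIntegral.integral_eq_sub_of_hasDeriv_right_of_le hN
        ((hgcont.mono hIccS).neg)
        (fun x hx => (hgder x (hIooS hx)).hasDerivWithinAt)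
        (iexp.add ihe)
      rw [this, Pi.neg_apply, Pi.neg_apply]; ring
    -- FTC 2: ∫ ψ e^{-φ} = e^{-φ M} - e^{-φ N}
    have ftc2 : ∫ t in M..N, ψ t * Real.exp (-φ t) = Real.exp (-φ M) - Real.exp (-φ N) := by
      have := intervalIntegral.integral_eq_sub_of_hasDerivAt (f := fun t => -Real.exp (-φ t))
        (f' := fun t => ψ t * Real.exp (-φ t)) (a := M) (b := N) ?_ iψe
      · rw [this]; ring
      · intro x hx
        rw [huIcc] at hx
        have := (((hdiff x (hIccS hx)).neg).exp).neg
        convert this using 1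
        · rfl
        · simp only [Pi.neg_apply]; ring
    have hsplit : ∫ t in M..N, Real.exp (-φ t)
        = (g M - g N) - ∫ t in M..N, Real.exp (-φ t) * h t := by
      rw [← ftc1, intervalIntegral.integral_add iexp ihe]; ring
    have habs : -∫ t in M..N, Real.exp (-φ t) * h t
        ≤ ∫ t in M..N, C * (ψ t * Real.exp (-φ t)) := by
      have h1 : -∫ t in M..N, Real.exp (-φ t) * h t
          ≤ |∫ t in M..N, Real.exp (-φ t) * h t| := neg_le_abs _
      refine h1.trans ((intervalIntegral.abs_integral_le_integral_abs hN).trans ?_)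
      rw [intervalIntegral.integral_of_le hN, intervalIntegral.integral_of_le hN]
      refine setIntegral_mono_on ?_ ?_ measurableSet_Ioc ?_
      · have : IntervalIntegrable (fun t => |Real.exp (-φ t) * h t|) volume M N := ihe.abs
        rw [intervalIntegrable_iff_integrableOn_Ioc_of_le hN] at this
        exact this
      · have : IntervalIntegrable (fun t => C * (ψ t * Real.exp (-φ t))) volume M N :=
          iψe.const_mul C
        rw [intervalIntegrable_iff_integrableOn_Ioc_of_le hN] at this
        exact this
      · intro x hx
        have hx' : x ∈ Ioi M₀ := hIocS hx
        have hxS : x ∈ S := le_of_lt (show M₀ < x from hx')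
        have hepos : 0 < Real.exp (-φ x) := Real.exp_pos _
        rw [abs_mul, abs_of_pos hepos]
        calc Real.exp (-φ x) * |h x| ≤ Real.exp (-φ x) * (C * ψ x) :=
              mul_le_mul_of_nonneg_left (hrat x hx') (le_of_lt hepos)
          _ = C * (ψ x * Real.exp (-φ x)) := by ring
    have hgN : 0 ≤ g N := by
      have hNS : N ∈ S := le_trans hM hN
      exact div_nonneg (Real.exp_pos _).le (hder N hNS).le
    calc ∫ t in M..N, Real.exp (-φ t)
        = (g M - g N) + -∫ t in M..N, Real.exp (-φ t) * h t := by rw [hsplit]; ring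
      _ ≤ g M + ∫ t in M..N, C * (ψ t * Real.exp (-φ t)) := by
          have := habs
          nlinarith [hgN]
      _ = g M + C * (Real.exp (-φ M) - Real.exp (-φ N)) := by
          rw [intervalIntegral.integral_const_mul, ftc2]
      _ ≤ Real.exp (-φ M) / ψ M + C * Real.exp (-φ M) := by
          have : 0 < Real.exp (-φ N) := Real.exp_pos _
          simp only [hg]
          nlinarith
  -- pass to the limit
  by_cases hi : IntegrableOn (fun t => Real.exp (-φ t)) (Ioi M) volume
  · have hlim := intervalIntegral_tendsto_integral_Ioi M hi Filter.tendsto_id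
    refine le_of_tendsto hlim ?_
    filter_upwards [Filter.eventually_ge_atTop M] with N hN using key N hN
  · rw [MeasureTheory.integral_undef hi]
    have hψM : 0 < ψ M := hder M hM
    positivity
end

section
/- Let φ: [M₀, ∞) → ℝ⁺ be C² with φ' > 0 and sup_{x ≥ M₀} |φ''(x)/(φ'(x))³| ≤ C. Then lim_{x→∞} e^{-φ(x)}/φ'(x) = 0 and lim_{x→∞} φ(x) = +∞. -/
open Set Filter

lemma sqrt_tendsto_atTop' : Tendsto Real.sqrt atTop atTop := by
  rw [tendsto_atTop_atTop]
  intro b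
  refine ⟨b ^ 2, fun x hx => ?_⟩
  calc b ≤ |b| := le_abs_self b
    _ = Real.sqrt (b ^ 2) := (Real.sqrt_sq_eq_abs b).symm
    _ ≤ Real.sqrt x := Real.sqrt_le_sqrt hx

/-- If `φ` is `C²` on `[M₀, ∞)`, positive with `φ' > 0` there, and `|φ''/(φ')³| ≤ C`
on `[M₀, ∞)`, then `e^{-φ(x)}/φ'(x) → 0` and `φ(x) → +∞` as `x → ∞`. -/
theorem tendsto_exp_neg_div_deriv (φ : ℝ → ℝ) (M₀ C : ℝ)
    (hC2 : ContDiffOn ℝ 2 φ (Ici M₀))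
    (hpos : ∀ x ∈ Ici M₀, 0 < φ x)
    (hder : ∀ x ∈ Ici M₀, 0 < deriv φ x)
    (hratio : ∀ x ∈ Ici M₀, |deriv (deriv φ) x / (deriv φ x) ^ 3| ≤ C) :
    Tendsto (fun x => Real.exp (-φ x) / deriv φ x) atTop (nhds 0) ∧
      Tendsto φ atTop atTop := by
  set f := deriv φ with hfdef
  have hC0 : 0 ≤ C := le_trans (abs_nonneg _) (hratio M₀ self_mem_Ici)
  set c : ℝ := C + 1 with hcdef
  have hcpos : 0 < c := by rw [hcdef]; linarith
  set a : ℝ := max (M₀ + 1) 1 with hadef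
  have haM : M₀ < a := lt_of_lt_of_le (by linarith) (le_max_left _ _)
  have ha1 : (1:ℝ) ≤ a := le_max_right _ _
  -- differentiability facts
  have hφd : ∀ x ∈ Ioi M₀, HasDerivAt φ (f x) x := fun x hx =>
    (differentiableAt_of_deriv_ne_zero (ne_of_gt (hder x (mem_Ici.mpr (le_of_lt (mem_Ioi.mp hx)))))).hasDerivAt
  have hfC1 : ContDiffOn ℝ 1 f (Ioi M₀) :=
    (hC2.mono (Ioi_subset_Ici le_rfl)).deriv_of_isOpen isOpen_Ioi (by norm_num)
  have hfd : ∀ x ∈ Ioi M₀, HasDerivAt f (deriv f x) x := fun x hx =>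
    ((hfC1.differentiableOn one_ne_zero).differentiableAt (isOpen_Ioi.mem_nhds hx)).hasDerivAt
  have hfne : ∀ x ∈ Ioi M₀, f x ≠ 0 := fun x hx => ne_of_gt (hder x (mem_Ici.mpr (le_of_lt (mem_Ioi.mp hx))))
  -- g = 1 / (f x)^2 and its derivative
  set g : ℝ → ℝ := fun x => (f x ^ 2)⁻¹ with hgdef
  have hgd : ∀ x ∈ Ioi M₀, HasDerivAt g (-(2 * (deriv f x / f x ^ 3))) x := by
    intro x hx
    have h1 : HasDerivAt (fun y => f y ^ 2) (2 * f x * deriv f x) x := by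
      simpa [mul_comm] using (hfd x hx).fun_pow 2
    have h2 := h1.fun_inv (pow_ne_zero 2 (hfne x hx))
    refine HasDerivAt.congr_deriv h2 ?_
    have hne := hfne x hx
    field_simp
  have hgb : ∀ x ∈ Ici a, ‖-(2 * (deriv f x / f x ^ 3))‖ ≤ 2 * c := by
    intro x hx
    have hr := hratio x (le_trans haM.le hx)
    rw [Real.norm_eq_abs, abs_neg, abs_mul, abs_two]
    have : |deriv f x / f x ^ 3| ≤ c := by rw [hcdef]; linarith
    linarith [abs_nonneg (deriv f x / f x ^ 3)]
  -- linear growth of g on [a, ∞)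
  set A : ℝ := g a with hAdef
  set P : ℝ → ℝ := fun x => A + 2 * c * x with hPdef
  have hgA : ∀ x ∈ Ici a, g x ≤ P x := by
    intro x hx
    have hmvt := Convex.norm_image_sub_le_of_norm_hasDerivWithin_le
      (f := g) (f' := fun x => -(2 * (deriv f x / f x ^ 3))) (s := Ici a)
      (fun y hy => (hgd y (lt_of_lt_of_le haM hy)).hasDerivWithinAt) hgb
      (convex_Ici a) self_mem_Ici hx
    rw [Real.norm_eq_abs, Real.norm_eq_abs] at hmvt
    have hax : a ≤ x := hx
    have h1 : g x - g a ≤ 2 * c * |x - a| := le_trans (le_abs_self _) hmvt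
    rw [abs_of_nonneg (by linarith)] at h1
    have hca : 0 ≤ 2 * c * a := by positivity
    simp only [hPdef]
    nlinarith
  have hP : ∀ x ∈ Ici a, 0 < P x := by
    intro x hx
    have hfx : 0 < f x := hder x (le_trans haM.le hx)
    have : 0 < g x := by simp only [hgdef]; positivity
    linarith [hgA x hx]
  -- lower bound on f
  have flb : ∀ x ∈ Ici a, (Real.sqrt (P x))⁻¹ ≤ f x := by
    intro x hx
    have hfx : 0 < f x := hder x (le_trans haM.le hx)
    have h1 : (P x)⁻¹ ≤ f x ^ 2 :=
      (inv_le_comm₀ (by positivity) (hP x hx)).mp (hgA x hx)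
    have h2 := Real.sqrt_le_sqrt h1
    rwa [Real.sqrt_inv, Real.sqrt_sq hfx.le] at h2
  -- ψ and its derivative
  set ψ : ℝ → ℝ := fun x => c⁻¹ * Real.sqrt (P x) with hψdef
  have hψd : ∀ x ∈ Ici a, HasDerivAt ψ ((Real.sqrt (P x))⁻¹) x := by
    intro x hx
    have hPx := hP x hx
    have hsq : 0 < Real.sqrt (P x) := Real.sqrt_pos.mpr hPx
    have h1 : HasDerivAt (fun y => A + 2 * c * y) (2 * c) x := by
      simpa using ((hasDerivAt_id x).const_mul (2 * c)).const_add A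
    have h2 := (Real.hasDerivAt_sqrt hPx.ne').comp x h1
    have h3 := h2.const_mul c⁻¹
    refine HasDerivAt.congr_deriv h3 ?_
    field_simp
  -- φ - ψ is monotone on [a, ∞)
  have hmono : MonotoneOn (fun x => φ x - ψ x) (Ici a) := by
    apply monotoneOn_of_hasDerivWithinAt_nonneg (convex_Ici a)
      (f' := fun x => f x - (Real.sqrt (P x))⁻¹)
    · intro x hx
      exact (((hφd x (lt_of_lt_of_le haM hx)).continuousAt).sub
        (hψd x hx).continuousAt).continuousWithinAt
    · intro x hx
      rw [interior_Ici] at hx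
      exact (((hφd x (lt_trans haM hx)).sub (hψd x (mem_Ici.mpr (mem_Ioi.mp hx).le))).hasDerivWithinAt).mono
        (by rw [interior_Ici])
    · intro x hx
      rw [interior_Ici] at hx
      exact sub_nonneg.mpr (flb x (mem_Ici.mpr (mem_Ioi.mp hx).le))
  set K : ℝ := φ a - ψ a with hKdef
  have hlow : ∀ x ∈ Ici a, K + ψ x ≤ φ x := by
    intro x hx
    have := hmono self_mem_Ici hx hx
    simp only at this
    linarith
  -- ψ tends to infinity
  have hPt : Tendsto P atTop atTop := by
    apply tendsto_atTop_add_const_left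
    exact Tendsto.const_mul_atTop (by positivity) tendsto_id
  have hψtop : Tendsto ψ atTop atTop := by
    apply Tendsto.const_mul_atTop (inv_pos.mpr hcpos)
    exact sqrt_tendsto_atTop'.comp hPt
  have hφtop : Tendsto φ atTop atTop := by
    refine tendsto_atTop_mono' atTop ?_ (tendsto_atTop_add_const_left _ K hψtop)
    filter_upwards [eventually_ge_atTop a] with x hx using hlow x hx
  refine ⟨?_, hφtop⟩
  -- the squeeze
  have hF : Tendsto (fun t : ℝ => t * Real.exp (-(c⁻¹ * t))) atTop (nhds 0) := by
    have h0 : Tendsto (fun y : ℝ => c * (y ^ 1 * Real.exp (-y))) atTop (nhds 0) := by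
      simpa using (Real.tendsto_pow_mul_exp_neg_atTop_nhds_zero 1).const_mul c
    have hl : Tendsto (fun t : ℝ => c⁻¹ * t) atTop atTop :=
      Tendsto.const_mul_atTop (inv_pos.mpr hcpos) tendsto_id
    refine (h0.comp hl).congr fun t => ?_
    simp only [Function.comp, pow_one]
    field_simp
  have hB : Tendsto (fun x => Real.exp (-K) *
      (Real.sqrt (P x) * Real.exp (-(c⁻¹ * Real.sqrt (P x))))) atTop (nhds 0) := by
    have := (hF.comp (sqrt_tendsto_atTop'.comp hPt)).const_mul (Real.exp (-K))
    simpa [Function.comp] using this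
  apply squeeze_zero' (g := fun x => Real.exp (-K) *
      (Real.sqrt (P x) * Real.exp (-(c⁻¹ * Real.sqrt (P x))))) _ _ hB
  · filter_upwards [eventually_ge_atTop a] with x hx
    have hfx : 0 < f x := hder x (le_trans haM.le hx)
    positivity
  · filter_upwards [eventually_ge_atTop a] with x hx
    have hx' : x ∈ Ici a := hx
    have hfx : 0 < f x := hder x (le_trans haM.le hx)
    have hsq : 0 < Real.sqrt (P x) := Real.sqrt_pos.mpr (hP x hx')
    have hfi : (f x)⁻¹ ≤ Real.sqrt (P x) :=
      (inv_le_comm₀ hfx hsq).mpr (flb x hx')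
    have he : Real.exp (-φ x) ≤ Real.exp (-(K + ψ x)) :=
      Real.exp_le_exp.mpr (by linarith [hlow x hx'])
    calc Real.exp (-φ x) / f x = Real.exp (-φ x) * (f x)⁻¹ := div_eq_mul_inv _ _
      _ ≤ Real.exp (-(K + ψ x)) * Real.sqrt (P x) :=
        mul_le_mul he hfi (by positivity) (Real.exp_pos _).le
      _ = Real.exp (-K) * (Real.sqrt (P x) * Real.exp (-(c⁻¹ * Real.sqrt (P x)))) := by
        rw [neg_add, Real.exp_add, hψdef]
        ring
end

section
/- Let p > 3 be prime. Every nontrivial irreducible complex representation of SL₂(𝔽_p) has dimension at least (p−1)/2. -/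
set_option maxRecDepth 20000

open CategoryTheory Matrix Polynomial

namespace FrobAux

variable {p : ℕ} [Fact p.Prime]

abbrev SL (p : ℕ) := Matrix.SpecialLinearGroup (Fin 2) (ZMod p)

def E (t : ZMod p) : SL p := ⟨!![1, t; 0, 1], by simp [Matrix.det_fin_two_of]⟩
def E' (t : ZMod p) : SL p := ⟨!![1, 0; t, 1], by simp [Matrix.det_fin_two_of]⟩
def W : SL p := ⟨!![0, 1; -1, 0], by simp [Matrix.det_fin_two_of]⟩
def D (a b : ZMod p) (h : a * b = 1) : SL p :=
  ⟨!![a, 0; 0, b], by simp [Matrix.det_fin_two_of, h]⟩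

lemma E_mul (t s : ZMod p) : E t * E s = E (t + s) := by
  apply Subtype.ext
  rw [Matrix.SpecialLinearGroup.coe_mul]
  simp only [Matrix.SpecialLinearGroup.coe_mul, E, Matrix.mul_fin_two]
  ext i j
  fin_cases i <;> fin_cases j <;> simp <;> ring

lemma E_zero : (E 0 : SL p) = 1 := by
  apply Subtype.ext
  simp only [E, Matrix.SpecialLinearGroup.coe_one]
  ext i j
  fin_cases i <;> fin_cases j <;> simp [Matrix.one_apply]

lemma E_pow (n : ℕ) : (E 1 : SL p) ^ n = E n := by
  induction n with
  | zero => simpa using E_zero.symm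
  | succ n ih => rw [pow_succ, ih, E_mul]; push_cast; ring_nf

lemma E_eq_pow (t : ZMod p) : E t = (E 1 : SL p) ^ t.val := by
  rw [E_pow]
  congr 1
  simp [ZMod.natCast_val, ZMod.cast_id]

lemma W_E (t : ZMod p) : W * E t = E' (-t) * W := by
  apply Subtype.ext
  rw [Matrix.SpecialLinearGroup.coe_mul, Matrix.SpecialLinearGroup.coe_mul]
  simp only [Matrix.SpecialLinearGroup.coe_mul, E, E', W, Matrix.mul_fin_two]
  ext i j
  fin_cases i <;> fin_cases j <;> simp

lemma D_E (a b : ZMod p) (h : a * b = 1) (t : ZMod p) :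
    D a b h * E t = E (a * a * t) * D a b h := by
  apply Subtype.ext
  rw [Matrix.SpecialLinearGroup.coe_mul, Matrix.SpecialLinearGroup.coe_mul]
  simp only [Matrix.SpecialLinearGroup.coe_mul, E, D, Matrix.mul_fin_two]
  ext i j
  fin_cases i <;> fin_cases j <;> simp <;> linear_combination (-(a * t)) * h

lemma SL2_decomp (g : SL p) (hc : g.1 1 0 ≠ 0) :
    g = E ((g.1 0 0 - 1) * (g.1 1 0)⁻¹) * E' (g.1 1 0) *
        E ((g.1 1 1 - 1) * (g.1 1 0)⁻¹) := by
  have hdet : g.1 0 0 * g.1 1 1 - g.1 0 1 * g.1 1 0 = 1 := by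
    rw [← Matrix.det_fin_two]; exact g.2
  apply Subtype.ext
  rw [Matrix.SpecialLinearGroup.coe_mul, Matrix.SpecialLinearGroup.coe_mul]
  simp only [Matrix.SpecialLinearGroup.coe_mul, E, E', Matrix.mul_fin_two]
  ext i j
  fin_cases i <;> fin_cases j <;> simp <;> field_simp <;>
    first
      | linear_combination hdet
      | linear_combination -hdet
      | linear_combination 2 * hdet
      | linear_combination -2 * hdet
      | linear_combination

lemma rho_trivial {M : Type*} [Monoid M] (ρ : SL p →* M) (h1 : ρ (E 1) = 1) (g : SL p) :
    ρ g = 1 := by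
  have hE : ∀ t : ZMod p, ρ (E t) = 1 := by
    intro t; rw [E_eq_pow, _root_.map_pow, h1, one_pow]
  have hWinv : ρ W * ρ W⁻¹ = 1 := by
    rw [← _root_.map_mul, mul_inv_cancel, _root_.map_one]
  have hE' : ∀ t : ZMod p, ρ (E' t) = 1 := by
    intro t
    have hw := congrArg ρ (W_E (p := p) (-t))
    rw [_root_.map_mul, _root_.map_mul, hE, neg_neg, mul_one] at hw
    calc ρ (E' t) = ρ (E' t) * (ρ W * ρ W⁻¹) := by rw [hWinv, mul_one]
    _ = (ρ (E' t) * ρ W) * ρ W⁻¹ := by rw [mul_assoc]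
    _ = ρ W * ρ W⁻¹ := by rw [← hw]
    _ = 1 := hWinv
  have key : ∀ h : SL p, h.1 1 0 ≠ 0 → ρ h = 1 := by
    intro h hc
    rw [SL2_decomp h hc, _root_.map_mul, _root_.map_mul, hE, hE', hE, one_mul, one_mul]
  by_cases hc : g.1 1 0 ≠ 0
  · exact key g hc
  · push_neg at hc
    have hdet : g.1 0 0 * g.1 1 1 - g.1 0 1 * g.1 1 0 = 1 := by
      rw [← Matrix.det_fin_two]; exact g.2
    have hd : g.1 1 1 ≠ 0 := by
      intro h0
      rw [hc, h0] at hdet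
      simp at hdet
    have hent : (↑(g * E' (1 : ZMod p)) : Matrix (Fin 2) (Fin 2) (ZMod p)) 1 0
        = g.1 1 0 + g.1 1 1 := by
      rw [Matrix.SpecialLinearGroup.coe_mul]
      simp [E', Matrix.SpecialLinearGroup.coe_mul, Matrix.mul_apply, Fin.sum_univ_two]
    have h2 : ρ (g * E' 1) = 1 := by
      apply key
      rw [hent, hc, zero_add]
      exact hd
    rw [_root_.map_mul, hE', mul_one] at h2
    exact h2

end FrobAux

open FrobAux

/-- Frobenius: for `p > 3` prime, every nontrivial irreducible complex representation of
`SL₂(𝔽_p)` has dimension at least `(p − 1)/2`. -/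
theorem frobenius_dim_bound (p : ℕ) (hp : p.Prime) (hp3 : 3 < p) [Fact p.Prime]
    (V : FDRep ℂ (Matrix.SpecialLinearGroup (Fin 2) (ZMod p))) [Simple V]
    (hnontriv : ∃ g, V.ρ g ≠ 1) :
    ((p : ℝ) - 1) / 2 ≤ (Module.finrank ℂ V : ℝ) := by
  classical
  haveI : NeZero p := ⟨hp.ne_zero⟩
  haveI : Nontrivial V := by
    by_contra h
    rw [not_nontrivial_iff_subsingleton] at h
    obtain ⟨g, hg⟩ := hnontriv
    exact hg (Subsingleton.elim _ _)
  set f : Module.End ℂ V := V.ρ (E 1) with hf_def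
  by_cases h1 : V.ρ (E 1) = 1
  · obtain ⟨g, hg⟩ := hnontriv
    exact absurd (rho_trivial V.ρ h1 g) hg
  have hEp : (E 1 : SL p) ^ p = 1 := by
    rw [E_pow, ZMod.natCast_self, E_zero]
  have hfp : f ^ p = 1 := by rw [hf_def, ← _root_.map_pow, hEp, _root_.map_one]
  -- minimal polynomial analysis: find an eigenvalue ζ ≠ 1
  have hint : IsIntegral ℂ f := Algebra.IsIntegral.isIntegral (R := ℂ) f
  have hmonic : (minpoly ℂ f).Monic := minpoly.monic hint
  have hdvd : minpoly ℂ f ∣ X ^ p - 1 := by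
    apply minpoly.dvd
    rw [map_sub, _root_.map_pow, aeval_X, _root_.map_one, hfp, sub_self]
  have hsep : (X ^ p - 1 : ℂ[X]).Separable := by
    have := Polynomial.separable_X_pow_sub_C (F := ℂ) (n := p) 1
      (Nat.cast_ne_zero.2 hp.ne_zero) one_ne_zero
    simpa using this
  have hmsep : (minpoly ℂ f).Separable := hsep.of_dvd hdvd
  have hdeg : 0 < (minpoly ℂ f).natDegree := minpoly.natDegree_pos hint
  have hmne : minpoly ℂ f ≠ X - C 1 := by
    intro h
    apply h1
    have h2 := minpoly.aeval ℂ f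
    rw [h, map_sub, aeval_X, aeval_C, _root_.map_one, sub_eq_zero] at h2
    exact h2
  obtain ⟨ζ, hζroot, hζ1⟩ : ∃ ζ : ℂ, (minpoly ℂ f).IsRoot ζ ∧ ζ ≠ 1 := by
    obtain ⟨ζ₀, hζ₀⟩ := IsAlgClosed.exists_root (k := ℂ) (minpoly ℂ f)
      (Polynomial.natDegree_pos_iff_degree_pos.mp hdeg).ne'
    by_cases hζ₀1 : ζ₀ = 1
    · subst hζ₀1
      have hdvd1 : (X - C (1 : ℂ)) ∣ minpoly ℂ f := dvd_iff_isRoot.2 hζ₀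
      obtain ⟨q, hq⟩ := hdvd1
      have hqmonic : q.Monic := (monic_X_sub_C (1 : ℂ)).of_mul_monic_left (hq ▸ hmonic)
      have hqdeg : 0 < q.natDegree := by
        rcases Nat.eq_zero_or_pos q.natDegree with h | h
        · exact absurd (by rw [hq, hqmonic.natDegree_eq_zero.mp h, mul_one]) hmne
        · exact h
      obtain ⟨ζ₁, hζ₁⟩ := IsAlgClosed.exists_root (k := ℂ) q
        (Polynomial.natDegree_pos_iff_degree_pos.mp hqdeg).ne'
      refine ⟨ζ₁, ?_, ?_⟩
      · rw [hq]
        simp only [IsRoot, eval_mul]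
        rw [hζ₁.eq_zero, mul_zero]
      · intro hζ₁1
        subst hζ₁1
        obtain ⟨r, hr⟩ := dvd_iff_isRoot.2 hζ₁
        have hsq : (X - C (1 : ℂ)) * (X - C 1) ∣ minpoly ℂ f :=
          ⟨r, by rw [hq, hr]; ring⟩
        exact Polynomial.not_isUnit_X_sub_C 1 (hmsep.squarefree _ hsq)
    · exact ⟨ζ₀, hζ₀, hζ₀1⟩
  have hev : f.HasEigenvalue ζ := Module.End.hasEigenvalue_of_isRoot hζroot
  have hζp : ζ ^ p = 1 := by
    have := hζroot.dvd hdvd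
    simpa [sub_eq_zero] using this
  have hζ0 : ζ ≠ 0 := by
    intro h
    rw [h, zero_pow hp.ne_zero] at hζp
    exact zero_ne_one hζp
  have hordζ : orderOf ζ = p := orderOf_eq_prime hζp hζ1
  -- power injectivity below p
  have hpowinj : ∀ i j : ℕ, i < p → j < p → ζ ^ i = ζ ^ j → i = j := by
    have main : ∀ i j : ℕ, i ≤ j → j < p → ζ ^ i = ζ ^ j → i = j := by
      intro i j hle hj hij
      have h2 : ζ ^ i * ζ ^ (j - i) = ζ ^ i * 1 := by
        rw [mul_one, ← pow_add, Nat.add_sub_cancel' hle]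
        exact hij.symm
      have h3 : ζ ^ (j - i) = 1 := mul_left_cancel₀ (pow_ne_zero _ hζ0) h2
      have h4 : p ∣ j - i := hordζ ▸ orderOf_dvd_of_pow_eq_one h3
      have h5 : j - i = 0 := Nat.eq_zero_of_dvd_of_lt h4 (by omega)
      omega
    intro i j hi hj hij
    rcases le_total i j with h | h
    · exact main i j h hj hij
    · exact (main j i h hi hij.symm).symm
  -- the eigenvector of ζ
  obtain ⟨v, hv⟩ := hev.exists_hasEigenvector
  have hpowapp : ∀ n : ℕ, (f ^ n) v = ζ ^ n • v := by
    intro n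
    induction n with
    | zero => simp
    | succ n ih =>
      rw [pow_succ, pow_succ, Module.End.mul_apply, Module.End.mem_eigenspace_iff.mp hv.1,
        _root_.map_smul, ih, smul_smul, mul_comm]
  -- key : for every unit a, ζ ^ ((a*a).val) is an eigenvalue of f
  have key : ∀ a : (ZMod p)ˣ,
      f.HasEigenvalue (ζ ^ ((a : ZMod p) * (a : ZMod p)).val) := by
    intro a
    have hab : (a : ZMod p) * ((a⁻¹ : (ZMod p)ˣ) : ZMod p) = 1 := by
      rw [← Units.val_mul, mul_inv_cancel, Units.val_one]
    set d : SL p := D _ _ hab with hd_def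
    have hrel : d * E 1 = E ((a : ZMod p) * (a : ZMod p)) * d := by
      have := D_E _ _ hab 1
      rwa [mul_one] at this
    set n : ℕ := ((a : ZMod p) * (a : ZMod p)).val with hn_def
    have hEs : (E ((a : ZMod p) * (a : ZMod p)) : SL p) = E 1 ^ n := E_eq_pow _
    set A : Module.End ℂ V := V.ρ d with hA_def
    set B : Module.End ℂ V := V.ρ d⁻¹ with hB_def
    have hAB : A * B = 1 := by rw [hA_def, hB_def, ← _root_.map_mul, mul_inv_cancel, _root_.map_one]
    have hBA : B * A = 1 := by rw [hA_def, hB_def, ← _root_.map_mul, inv_mul_cancel, _root_.map_one]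
    have hρrel : A * f = f ^ n * A := by
      have := congrArg V.ρ hrel
      rw [_root_.map_mul, _root_.map_mul, hEs, _root_.map_pow] at this
      exact this
    have hfB : f * B = B * f ^ n := by
      calc f * B = (B * A) * (f * B) := by rw [hBA, one_mul]
      _ = B * ((A * f) * B) := by rw [mul_assoc, mul_assoc]
      _ = B * ((f ^ n * A) * B) := by rw [hρrel]
      _ = B * (f ^ n * (A * B)) := by rw [mul_assoc]
      _ = B * f ^ n := by rw [hAB, mul_one]
    have hBv0 : B v ≠ 0 := by
      intro h
      have : (A * B) v = 0 := by rw [Module.End.mul_apply, h, map_zero]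
      rw [hAB] at this
      exact hv.2 (by simpa using this)
    have heig : f (B v) = ζ ^ n • B v := by
      have : (f * B) v = (B * f ^ n) v := by rw [hfB]
      rw [Module.End.mul_apply, Module.End.mul_apply, hpowapp, _root_.map_smul] at this
      exact this
    exact Module.End.hasEigenvalue_of_hasEigenvector
      ⟨Module.End.mem_eigenspace_iff.mpr heig, hBv0⟩
  -- the set of eigenvalues
  set q : (ZMod p)ˣ → ℂ := fun a => ζ ^ ((a : ZMod p) * (a : ZMod p)).val with hq_def
  set S : Finset ℂ := Finset.image q Finset.univ with hS_def
  -- each fiber of q has at most 2 elements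
  have hfib : ∀ a b : (ZMod p)ˣ, q a = q b → a = b ∨ a = -b := by
    intro a b hab
    have h1 : ((a : ZMod p) * (a : ZMod p)).val = ((b : ZMod p) * (b : ZMod p)).val :=
      hpowinj _ _ (ZMod.val_lt _) (ZMod.val_lt _) hab
    have h2 : (a : ZMod p) * (a : ZMod p) = (b : ZMod p) * (b : ZMod p) :=
      ZMod.val_injective p h1
    have h3 : ((a : ZMod p) - b) * ((a : ZMod p) + b) = 0 := by linear_combination h2
    rcases mul_eq_zero.1 h3 with h | h
    · left
      exact Units.ext (by linear_combination h)
    · right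
      apply Units.ext
      rw [Units.val_neg]
      linear_combination h
  have hcard : p - 1 ≤ 2 * S.card := by
    have h0 : Fintype.card (ZMod p)ˣ ≤ 2 * S.card := by
      rw [← Finset.card_univ]
      rw [Finset.card_eq_sum_card_fiberwise
        (f := q) (t := S) (fun a _ => Finset.mem_image_of_mem q (Finset.mem_univ a))]
      have hbound : ∀ z ∈ S, (Finset.univ.filter (fun a => q a = z)).card ≤ 2 := by
        intro z hz
        obtain ⟨b, -, rfl⟩ := Finset.mem_image.1 hz
        have hsub : Finset.univ.filter (fun a => q a = q b) ⊆ {b, -b} := by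
          intro a ha
          rcases hfib a b (Finset.mem_filter.1 ha).2 with h | h
          · simp [h]
          · simp [h]
        calc (Finset.univ.filter (fun a => q a = q b)).card
            ≤ ({b, -b} : Finset (ZMod p)ˣ).card := Finset.card_le_card hsub
        _ ≤ 2 := (Finset.card_insert_le _ _).trans (by simp)
      calc ∑ z ∈ S, (Finset.univ.filter (fun a => q a = z)).card
          ≤ ∑ _z ∈ S, 2 := Finset.sum_le_sum hbound
      _ = 2 * S.card := by rw [Finset.sum_const, smul_eq_mul, mul_comm]
    rw [← ZMod.card_units p]
    exact h0
  -- distinct eigenvalues give independent eigenvectors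
  have hev' : ∀ z : {x // x ∈ S}, ∃ w, f.HasEigenvector (z : ℂ) w := by
    rintro ⟨z, hz⟩
    obtain ⟨a, -, rfl⟩ := Finset.mem_image.1 hz
    exact (key a).exists_hasEigenvector
  choose xs hxs using hev'
  have hli : LinearIndependent ℂ xs :=
    f.eigenvectors_linearIndependent' (fun z : {x // x ∈ S} => (z : ℂ))
      Subtype.val_injective xs hxs
  have hcard2 : S.card ≤ Module.finrank ℂ V := by
    have := hli.fintype_card_le_finrank
    simpa [Fintype.card_coe] using this
  have hfinal : p - 1 ≤ 2 * Module.finrank ℂ V := by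
    calc p - 1 ≤ 2 * S.card := hcard
    _ ≤ 2 * Module.finrank ℂ V := Nat.mul_le_mul_left 2 hcard2
  have hcast : ((p - 1 : ℕ) : ℝ) = (p : ℝ) - 1 := by
    rw [Nat.cast_sub hp.one_lt.le]
    simp
  rw [div_le_iff₀ (by norm_num : (0 : ℝ) < 2)]
  have := (Nat.cast_le (α := ℝ)).2 hfinal
  rw [hcast] at this
  push_cast at this
  linarith
end
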